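/- Let p be a prime, n a positive integer, and let F(X) = ∑_{0<i<j<n} c_{ij} X^{p^i+p^j+1} be a cubic function in F_{p^n}[X] (c_{ij} ∈ F_{p^n}). For a, b ∈ F_{p^n}, define the linearized polynomial L_{a,b}(X) = ∑_{0<i<j<n} c_{ij} ( X·(a^{p^i} b^{p^j} + a^{p^j} b^{p^i}) + X^{p^i}·(b·a^{p^j} + a·b^{p^j}) + X^{p^j}·(b·a^{p^i} + a·b^{p^i}) ) and δ_{a,b} = ∑_{0<i<j<n} c_{ij} ( (a+b)(a^{p^i} b^{p^j} + a^{p^j} b^{p^i}) + a·b^{p^i+p^j} + b·a^{p^i+p^j} ). Then: ∇_F(a,b) = p^n if ab = 0; ∇_F(a,b) = #{X ∈ F_{p^n} : L_{a,b}(X) = 0} = p^{dim_{F_p} ker L_{a,b}} if δ_{a,b} lies in the image of the map X ↦ L_{a,b}(X) on F_{p^n}; and ∇_F(a,b) = 0 if δ_{a,b} does not lie in that image. -/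

import Mathlib

open Finset

/-- Second-order zero differential spectrum of `f` at `(a, b)`:
the number of `X` with `f(X+a+b) - f(X+b) - f(X+a) + f(X) = 0`. -/
def sozdSpec {K : Type*} [Field K] [Fintype K] [DecidableEq K] (f : K → K) (a b : K) : ℕ :=
  (Finset.univ.filter fun X : K => f (X + a + b) - f (X + b) - f (X + a) + f X = 0).card

/-- DDT entry of `f` at `(a, b)`: the number of `X` with `f(X+a) - f(X) = b`. -/
def ddtEntry {K : Type*} [Field K] [Fintype K] [DecidableEq K] (f : K → K) (a b : K) : ℕ :=
  (Finset.univ.filter fun X : K => f (X + a) - f X = b).card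

/-- Differential uniformity of `f`: `max {Δ_f(a,b) : a ≠ 0, b}`. -/
def diffUnif {K : Type*} [Field K] [Fintype K] [DecidableEq K] (f : K → K) : ℕ :=
  Finset.sup ((Finset.univ.filter fun a : K => a ≠ 0) ×ˢ Finset.univ)
    fun ab => ddtEntry f ab.1 ab.2

/-- Second-order zero differential uniformity (odd characteristic):
`max {∇_f(a,b) : a ≠ 0, b ≠ 0}`. -/
def sozdUnifOdd {K : Type*} [Field K] [Fintype K] [DecidableEq K] (f : K → K) : ℕ :=
  Finset.sup ((Finset.univ.filter fun a : K => a ≠ 0) ×ˢ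
      (Finset.univ.filter fun b : K => b ≠ 0))
    fun ab => sozdSpec f ab.1 ab.2

/-- Second-order zero differential spectrum of a cubic function
`F(X) = ∑_{0<i<j<n} c_{ij} X^{p^i+p^j+1}` over `F_{p^n}`. -/
theorem sozd_spectrum_cubic
    {p n : ℕ} (hp : p.Prime) (hn : 0 < n)
    {K : Type*} [Field K] [Fintype K] [DecidableEq K] [CharP K p]
    [Algebra (ZMod p) K]
    (hcard : Fintype.card K = p ^ n)
    (c : ℕ → ℕ → K) (a b : K)
    (f : K → K)
    (hf : ∀ X : K, f X = ∑ j ∈ Finset.range n, ∑ i ∈ Finset.Ioo 0 j,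
        c i j * X ^ (p ^ i + p ^ j + 1))
    (L : K → K)
    (hL : ∀ X : K, L X = ∑ j ∈ Finset.range n, ∑ i ∈ Finset.Ioo 0 j,
        c i j * (X * (a ^ p ^ i * b ^ p ^ j + a ^ p ^ j * b ^ p ^ i)
          + X ^ p ^ i * (b * a ^ p ^ j + a * b ^ p ^ j)
          + X ^ p ^ j * (b * a ^ p ^ i + a * b ^ p ^ i)))
    (δ : K)
    (hδ : δ = ∑ j ∈ Finset.range n, ∑ i ∈ Finset.Ioo 0 j,
        c i j * ((a + b) * (a ^ p ^ i * b ^ p ^ j + a ^ p ^ j * b ^ p ^ i)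
          + a * b ^ (p ^ i + p ^ j) + b * a ^ (p ^ i + p ^ j))) :
    (a * b = 0 → sozdSpec f a b = p ^ n) ∧
    ((∃ X : K, L X = δ) →
      sozdSpec f a b = (Finset.univ.filter fun X : K => L X = 0).card ∧
      ∀ ℓ : K →ₗ[ZMod p] K, (∀ X : K, ℓ X = L X) →
        sozdSpec f a b = p ^ Module.finrank (ZMod p) (LinearMap.ker ℓ)) ∧
    ((¬ ∃ X : K, L X = δ) → sozdSpec f a b = 0) := by
  haveI := Fact.mk hp
  have hfrob : ∀ (k : ℕ) (u v : K), (u + v) ^ p ^ k = u ^ p ^ k + v ^ p ^ k :=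
    fun k u v => add_pow_char_pow u v p k
  have hz : ∀ k : ℕ, (0 : K) ^ p ^ k = 0 := fun k => zero_pow (pow_ne_zero _ hp.ne_zero)
  -- key identity: second-order difference equals L X + δ
  have key : ∀ X : K, f (X + a + b) - f (X + b) - f (X + a) + f X = L X + δ := by
    intro X
    rw [hf, hf, hf, hf, hL, hδ]
    simp only [← Finset.sum_sub_distrib, ← Finset.sum_add_distrib]
    refine Finset.sum_congr rfl fun j hj => Finset.sum_congr rfl fun i hi => ?_
    simp only [pow_add, pow_one, hfrob i, hfrob j]
    ring
  have hcount : sozdSpec f a b = (Finset.univ.filter fun X : K => L X = -δ).card := by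
    unfold sozdSpec
    congr 1
    ext X
    simp only [Finset.mem_filter, Finset.mem_univ, true_and]
    rw [key X, add_eq_zero_iff_eq_neg]
  -- additivity of L
  have hLadd : ∀ X Y : K, L (X + Y) = L X + L Y := by
    intro X Y
    rw [hL, hL, hL]
    simp only [← Finset.sum_add_distrib]
    refine Finset.sum_congr rfl fun j hj => Finset.sum_congr rfl fun i hi => ?_
    simp only [hfrob i, hfrob j]
    ring
  have hL0 : L 0 = 0 := by
    rw [hL]
    refine Finset.sum_eq_zero fun j hj => Finset.sum_eq_zero fun i hi => ?_
    simp [hz i, hz j]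
  have hLneg : ∀ X : K, L (-X) = -L X := by
    intro X
    have h := hLadd X (-X)
    rw [add_neg_cancel, hL0] at h
    linear_combination -h
  refine ⟨?_, ?_, ?_⟩
  · -- case a*b = 0
    intro hab
    have hδ0 : δ = 0 := by
      rw [hδ]
      refine Finset.sum_eq_zero fun j hj => Finset.sum_eq_zero fun i hi => ?_
      rcases mul_eq_zero.1 hab with h | h <;> rw [h] <;>
        simp [hz i, hz j, pow_add, hz]
    have hLz : ∀ X : K, L X = 0 := by
      intro X
      rw [hL]
      refine Finset.sum_eq_zero fun j hj => Finset.sum_eq_zero fun i hi => ?_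
      rcases mul_eq_zero.1 hab with h | h <;> rw [h] <;>
        simp [hz i, hz j]
    rw [hcount, hδ0, neg_zero]
    rw [Finset.filter_true_of_mem fun X _ => hLz X, Finset.card_univ, hcard]
  · -- case δ in image of L
    rintro ⟨X0, hX0⟩
    have hmain : sozdSpec f a b = (Finset.univ.filter fun X : K => L X = 0).card := by
      rw [hcount]
      refine Finset.card_nbij' (fun X => X + X0) (fun X => X - X0) ?_ ?_ ?_ ?_
      · intro X hX
        simp only [Finset.mem_coe, Finset.mem_filter, Finset.mem_univ, true_and] at hX ⊢
        rw [hLadd, hX, hX0]; ring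
      · intro X hX
        simp only [Finset.mem_coe, Finset.mem_filter, Finset.mem_univ, true_and] at hX ⊢
        rw [sub_eq_add_neg, hLadd, hX, hLneg, hX0]; ring
      · intro X _; ring
      · intro X _; ring
    refine ⟨hmain, fun ℓ hℓ => ?_⟩
    rw [hmain]
    haveI : Fintype (LinearMap.ker ℓ) := Fintype.ofFinite _
    have h1 : Fintype.card (LinearMap.ker ℓ) = Fintype.card {x : K // L x = 0} :=
      Fintype.card_congr (Equiv.subtypeEquivRight fun x => by
        simp [LinearMap.mem_ker, hℓ])
    have h2 : Fintype.card {x : K // L x = 0}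
        = (Finset.univ.filter fun X : K => L X = 0).card := Fintype.card_subtype _
    rw [← h2, ← h1, Module.card_eq_pow_finrank (K := ZMod p), ZMod.card]
  · -- case δ not in image
    intro hne
    rw [hcount, Finset.card_eq_zero, Finset.filter_eq_empty_iff]
    intro X _
    intro hX
    exact hne ⟨-X, by rw [hLneg, hX, neg_neg]⟩
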